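/- The polydiagonal subspace Δ_c of a coloring vector c ∈ ℤⁿ is invariant under a matrix M ∈ ℝⁿˣⁿ if and only if for every k ∈ K_c, the vector w^(k) := M b^(k) satisfies: c_i = c_j implies w^(k)_i = w^(k)_j, c_i = -c_j implies w^(k)_i = -w^(k)_j, and c_i = 0 implies w^(k)_i = 0, for all distinct i, j. -/
import Mathlib


/-- The maximum of `c₁,…,c_{i-1}` (0-indexed: `c 0, …, c (i-1)`), for `i > 0`. -/
def maxBelow {n : ℕ} (c : Fin n → ℤ) (i : Fin n) (hi : 0 < i.val) : ℤ :=
  (Finset.Iio i).sup' ⟨⟨0, lt_of_le_of_lt (Nat.zero_le _) i.isLt⟩, Finset.mem_Iio.mpr hi⟩ c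

/-- `c` is a coloring vector: the first component is 0 or 1, and each later component
satisfies `-mᵢ ≤ cᵢ ≤ 1 + mᵢ` where `mᵢ` is the max of the preceding components. -/
def IsColoringVec {n : ℕ} (c : Fin n → ℤ) : Prop :=
  (∀ h0 : 0 < n, c ⟨0, h0⟩ = 0 ∨ c ⟨0, h0⟩ = 1) ∧
  ∀ (i : Fin n) (hi : 0 < i.val), -maxBelow c i hi ≤ c i ∧ c i ≤ 1 + maxBelow c i hi

/-- The polydiagonal subspace `Δ_c` of `ℝⁿ` associated to `c ∈ ℤⁿ`. -/
def DeltaSub {n : ℕ} (c : Fin n → ℤ) : Submodule ℝ (Fin n → ℝ) where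
  carrier := {x | ∀ i j : Fin n, (c i = c j → x i = x j) ∧ (c i = -c j → x i = -x j)}
  zero_mem' := by intro i j; simp
  add_mem' := by
    intro a b ha hb i j
    refine ⟨fun h => ?_, fun h => ?_⟩
    · simp [Pi.add_apply, (ha i j).1 h, (hb i j).1 h]
    · simp only [Pi.add_apply, (ha i j).2 h, (hb i j).2 h]; ring
  smul_mem' := by
    intro r a ha i j
    refine ⟨fun h => ?_, fun h => ?_⟩
    · simp [Pi.smul_apply, (ha i j).1 h]
    · simp only [Pi.smul_apply, (ha i j).2 h, smul_eq_mul]; ring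

/-- The set of colors of `c`: the nonzero absolute values of its components. -/
def Kc {n : ℕ} (c : Fin n → ℤ) : Finset ℤ := (Finset.univ.image fun i => |c i|).erase 0

/-- The basis vector `b⁽ᵏ⁾` with `b⁽ᵏ⁾ᵢ = δ_k(cᵢ)`. -/
def bvec {n : ℕ} (c : Fin n → ℤ) (k : ℤ) : Fin n → ℝ :=
  fun i => if c i = k then 1 else if c i = -k then -1 else 0

/-- `Δ_c` is invariant under `M` iff for every color `k ∈ K_c`, the vector
`w⁽ᵏ⁾ = M b⁽ᵏ⁾` satisfies the synchrony/anti-synchrony conditions of `c`. -/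
theorem deltaSub_invariant_iff {n : ℕ} (c : Fin n → ℤ) (hc : IsColoringVec c)
    (M : Matrix (Fin n) (Fin n) ℝ) :
    (∀ x ∈ DeltaSub c, M.mulVec x ∈ DeltaSub c) ↔
      ∀ k ∈ Kc c, ∀ i j : Fin n, i ≠ j →
        (c i = c j → M.mulVec (bvec c k) i = M.mulVec (bvec c k) j) ∧
        (c i = -c j → M.mulVec (bvec c k) i = -M.mulVec (bvec c k) j) ∧
        (c i = 0 → M.mulVec (bvec c k) i = 0) := by
  have hmem : ∀ x, x ∈ DeltaSub c ↔
      ∀ i j : Fin n, (c i = c j → x i = x j) ∧ (c i = -c j → x i = -x j) := fun x => Iff.rfl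
  have hKc : ∀ k, k ∈ Kc c ↔ (0 < k ∧ ∃ i, c i = k ∨ c i = -k) := by
    intro k
    simp only [Kc, Finset.mem_erase, Finset.mem_image, Finset.mem_univ, true_and]
    constructor
    · rintro ⟨hk0, i, hi⟩
      have h1 : 0 ≤ |c i| := abs_nonneg _
      have h2 : c i = |c i| ∨ c i = -|c i| := abs_choice (c i) |>.imp Eq.symm (by omega)
      exact ⟨by omega, i, by omega⟩
    · rintro ⟨hk0, i, hi⟩
      have h1 : 0 ≤ |c i| := abs_nonneg _
      have h2 : c i = |c i| ∨ c i = -|c i| := abs_choice (c i) |>.imp Eq.symm (by omega)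
      exact ⟨by omega, i, by omega⟩
  constructor
  · intro hM k hk i j hij
    obtain ⟨hk0, -⟩ := (hKc k).mp hk
    have hb : bvec c k ∈ DeltaSub c := by
      rw [hmem]
      intro p q
      constructor
      · intro h; simp [bvec, h]
      · intro h
        simp only [bvec]
        split_ifs <;> norm_num <;> omega
    have hw := (hmem _).mp (hM _ hb)
    refine ⟨(hw i j).1, (hw i j).2, fun h0 => ?_⟩
    have := (hw i i).2 (by omega)
    linarith
  · intro h x hx
    rw [hmem] at hx
    have hw : ∀ k ∈ Kc c, M.mulVec (bvec c k) ∈ DeltaSub c := by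
      intro k hk
      obtain ⟨hk0, l, hl⟩ := (hKc k).mp hk
      rw [hmem]
      intro p q
      constructor
      · intro hpq
        by_cases hpq' : p = q
        · subst hpq'; rfl
        · exact (h k hk p q hpq').1 hpq
      · intro hpq
        by_cases hpq' : p = q
        · subst hpq'
          have hcp : c p = 0 := by omega
          have hpl : p ≠ l := by intro e; subst e; omega
          have := (h k hk p l hpl).2.2 hcp
          linarith
        · exact (h k hk p q hpq').2.1 hpq
    classical
    set a : ℤ → ℝ := fun k =>
      if hex : ∃ i, c i = k ∨ c i = -k then x hex.choose * bvec c k hex.choose else 0 with ha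
    have hdecomp : x = ∑ k ∈ Kc c, a k • bvec c k := by
      funext jj
      simp only [Finset.sum_apply, Pi.smul_apply, smul_eq_mul]
      by_cases hj0 : c jj = 0
      · have hx0 : x jj = 0 := by
          have := (hx jj jj).2 (by omega); linarith
        rw [hx0]
        refine (Finset.sum_eq_zero fun k hk => ?_).symm
        obtain ⟨hk0, -⟩ := (hKc k).mp hk
        have : bvec c k jj = 0 := by
          simp only [bvec]; rw [if_neg (by omega), if_neg (by omega)]
        rw [this, mul_zero]
      · obtain ⟨m, hm, hmpos⟩ : ∃ m, (c jj = m ∨ c jj = -m) ∧ 0 < m := by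
          rcases lt_or_gt_of_ne (show c jj ≠ 0 from hj0) with h' | h'
          · exact ⟨-c jj, Or.inr (by omega), by omega⟩
          · exact ⟨c jj, Or.inl rfl, h'⟩
        have hmKc : m ∈ Kc c := (hKc m).mpr ⟨hmpos, jj, hm⟩
        rw [Finset.sum_eq_single m]
        · have hex : ∃ i, c i = m ∨ c i = -m := ⟨jj, hm⟩
          have hi : c hex.choose = m ∨ c hex.choose = -m := hex.choose_spec
          simp only [ha, dif_pos hex]
          have hb1 : ∀ p, c p = m → bvec c m p = 1 := fun p hp => by
            simp only [bvec]; rw [if_pos hp]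
          have hb2 : ∀ p, c p = -m → bvec c m p = -1 := fun p hp => by
            simp only [bvec]; rw [if_neg (by omega), if_pos hp]
          rcases hi with hci | hci <;> rcases hm with hcj | hcj
          · have := (hx hex.choose jj).1 (by omega)
            rw [hb1 _ hci, hb1 _ hcj, this]; ring
          · have := (hx hex.choose jj).2 (by omega)
            rw [hb1 _ hci, hb2 _ hcj, this]; ring
          · have := (hx hex.choose jj).2 (by omega)
            rw [hb2 _ hci, hb1 _ hcj, this]; ring
          · have := (hx hex.choose jj).1 (by omega)
            rw [hb2 _ hci, hb2 _ hcj, this]; ring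
        · intro k hk hkm
          obtain ⟨hk0, -⟩ := (hKc k).mp hk
          have : bvec c k jj = 0 := by
            simp only [bvec]; rw [if_neg (by omega), if_neg (by omega)]
          rw [this, mul_zero]
        · intro hnot; exact absurd hmKc hnot
    have : M.mulVec x = ∑ k ∈ Kc c, a k • M.mulVec (bvec c k) := by
      rw [hdecomp, ← M.mulVecLin_apply, map_sum]
      simp [Matrix.mulVecLin_apply]
    rw [this]
    exact Submodule.sum_mem _ fun k hk => Submodule.smul_mem _ _ (hw k hk)
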